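/- For integers n, m ≥ 0 and M ∈ ℤ with m + M ≥ 0 and n − M ≥ 0, one has Z^{(M)}_{(n,m)} + Z^{(M)}_{(m+M, n−M)} = 0 in ℚ(t). -/

import Mathlib

open Finset

/-- The variable `t` of the field `ℚ(t)` of rational functions. -/
noncomputable def tR : RatFunc ℚ := RatFunc.X

/-- `Z^{(M)}_{(n,m)} = t^{(n−M)m}(t^{m+M} − t^{n}) /
  [∏_{s=1}^{n}(1−t^{−s}) · ∏_{s=1}^{m+M}(1−t^{−s}) · ∏_{s=1}^{m}(1−t^{s}) · ∏_{s=1}^{n−M}(1−t^{s})]`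
in `ℚ(t)` (intended for `m + M ≥ 0` and `n − M ≥ 0`). -/
noncomputable def Zres (n m : ℕ) (M : ℤ) : RatFunc ℚ :=
  tR ^ (((n : ℤ) - M) * (m : ℤ)) * (tR ^ ((m : ℤ) + M) - tR ^ (n : ℤ)) /
    ((∏ s ∈ Finset.Icc 1 n, (1 - tR ^ (-(s : ℤ)))) *
      (∏ s ∈ Finset.Icc 1 ((m : ℤ) + M).toNat, (1 - tR ^ (-(s : ℤ)))) *
      (∏ s ∈ Finset.Icc 1 m, (1 - tR ^ s)) *
      ∏ s ∈ Finset.Icc 1 ((n : ℤ) - M).toNat, (1 - tR ^ s))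

/-- `Z^{(M)}_{(n,m)} + Z^{(M)}_{(m+M, n−M)} = 0` in `ℚ(t)`. -/
theorem crystal_residue_antisymm (n m : ℕ) (M : ℤ)
    (h1 : 0 ≤ (m : ℤ) + M) (h2 : 0 ≤ (n : ℤ) - M) :
    Zres n m M + Zres ((m : ℤ) + M).toNat ((n : ℤ) - M).toNat M = 0 := by
  have e1 : (((m : ℤ) + M).toNat : ℤ) = (m : ℤ) + M := Int.toNat_of_nonneg h1
  have e2 : (((n : ℤ) - M).toNat : ℤ) = (n : ℤ) - M := Int.toNat_of_nonneg h2
  unfold Zres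
  rw [e1, e2]
  have e3 : ((n : ℤ) - M + M).toNat = n := by omega
  have e4 : ((m : ℤ) + M - M).toNat = m := by omega
  rw [e3, e4]
  ring_nf
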